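/- Rule determinism: Let R be a patch graph rewrite system (all rules have simple left patch types), and let G = C ·_J P_L. If a single rule (P_L, T_L) →^τ (P_R, T_R) ∈ R^≈ derives both rewrite steps G →_R C ·_{J'} P_R = G' and G →_R C ·_{J''} P_R = G'', then G' ≈ G''. -/

import Mathlib

namespace PGR

structure Graph (V E L : Type) where
  Vs : Set V
  Es : Set E
  finV : Vs.Finite
  finE : Es.Finite
  src : E → V
  tgt : E → V
  lab : E → L

variable {V E L : Type}

/-- Well-formedness: every edge's endpoints lie in the vertex set. -/
def Graph.WF (G : Graph V E L) : Prop :=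
  ∀ e ∈ G.Es, G.src e ∈ G.Vs ∧ G.tgt e ∈ G.Vs

/-- A graph is simple if edges are determined by source, target and label. -/
def Graph.Simple (G : Graph V E L) : Prop :=
  ∀ e ∈ G.Es, ∀ e' ∈ G.Es,
    G.src e = G.src e' → G.tgt e = G.tgt e' → G.lab e = G.lab e' → e = e'

/-- Disjointness of graphs (vertex and edge sets). -/
def Disj {L₁ L₂ : Type} (G : Graph V E L₁) (H : Graph V E L₂) : Prop :=
  G.Vs ∩ H.Vs = ∅ ∧ G.Es ∩ H.Es = ∅

/-- J is a patch for context graph C and match graph M. -/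
def IsPatch {L₁ L₂ L₃ : Type} (C : Graph V E L₁) (M : Graph V E L₂)
    (J : Graph V E L₃) : Prop :=
  J.Es ∩ (C.Es ∪ M.Es) = ∅ ∧
  J.Vs = J.src '' J.Es ∪ J.tgt '' J.Es ∧
  ∀ e ∈ J.Es,
    (J.src e ∈ C.Vs ∧ J.tgt e ∈ M.Vs) ∨
    (J.src e ∈ M.Vs ∧ J.tgt e ∈ C.Vs) ∨
    (J.src e ∈ M.Vs ∧ J.tgt e ∈ M.Vs)

/-- The trivial one-node graph on the context node □ (here `sq`). -/
def trivialGraph (E : Type) (sq : V) : Graph V E Unit where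
  Vs := {sq}
  Es := ∅
  finV := Set.finite_singleton _
  finE := Set.finite_empty
  src := fun _ => sq
  tgt := fun _ => sq
  lab := fun _ => ()

/-- T is a patch type for M with context node `sq` (= □). -/
def IsPatchType {L₂ : Type} (sq : V) (M : Graph V E L₂) (T : Graph V E Unit) : Prop :=
  sq ∉ M.Vs ∧ IsPatch (trivialGraph E sq) M T

open Classical in
/-- Graph union (intended for graphs with disjoint edge sets). -/
noncomputable def Graph.union (G H : Graph V E L) : Graph V E L where
  Vs := G.Vs ∪ H.Vs
  Es := G.Es ∪ H.Es
  finV := G.finV.union H.finV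
  finE := G.finE.union H.finE
  src := fun e => if e ∈ G.Es then G.src e else H.src e
  tgt := fun e => if e ∈ G.Es then G.tgt e else H.tgt e
  lab := fun e => if e ∈ G.Es then G.lab e else H.lab e

/-- Patch composition C ·_J M = C ∪ J ∪ M. -/
noncomputable def comp (C J M : Graph V E L) : Graph V E L :=
  (C.union J).union M

/-- Equality of graphs (functions compared on the edge set only). -/
def Graph.Eq (G H : Graph V E L) : Prop :=
  G.Vs = H.Vs ∧ G.Es = H.Es ∧
  ∀ e ∈ G.Es, G.src e = H.src e ∧ G.tgt e = H.tgt e ∧ G.lab e = H.lab e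

/-- A graph renaming: bijections on vertices and edges. -/
structure Renaming (V E : Type) where
  rV : V ≃ V
  rE : E ≃ E

/-- The φ-renaming of a graph. -/
def Renaming.apply (φ : Renaming V E) (G : Graph V E L) : Graph V E L where
  Vs := φ.rV '' G.Vs
  Es := φ.rE '' G.Es
  finV := G.finV.image _
  finE := G.finE.image _
  src := fun e => φ.rV (G.src (φ.rE.symm e))
  tgt := fun e => φ.rV (G.tgt (φ.rE.symm e))
  lab := fun e => G.lab (φ.rE.symm e)

/-- Graph isomorphism: existence of a renaming φ with φ(G) = H. -/
def Iso (G H : Graph V E L) : Prop :=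
  ∃ φ : Renaming V E, (φ.apply G).Eq H

/-- Patch edge j adheres to patch type edge t. -/
def AdheresEdge {L₁ L₂ L₃ : Type} (sq : V) (C : Graph V E L₁) (M : Graph V E L₂)
    (J : Graph V E L₃) (T : Graph V E Unit) (j t : E) : Prop :=
  (J.src j ∈ C.Vs → T.src t = sq) ∧
  (J.src j ∈ M.Vs → T.src t = J.src j) ∧
  (J.tgt j ∈ C.Vs → T.tgt t = sq) ∧
  (J.tgt j ∈ M.Vs → T.tgt t = J.tgt j)

/-- h is an adherence map from patch J to patch type T. -/
def AdherenceMap {L₁ L₂ L₃ : Type} (sq : V) (C : Graph V E L₁) (M : Graph V E L₂)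
    (J : Graph V E L₃) (T : Graph V E Unit) (h : E → E) : Prop :=
  ∀ j ∈ J.Es, h j ∈ T.Es ∧ AdheresEdge sq C M J T j (h j)

open Classical in
/-- cxt_h(e): the context node involved in patch edge e, if any. -/
noncomputable def cxt {L₃ : Type} (sq : V) (J : Graph V E L₃) (T : Graph V E Unit)
    (h : E → E) (e : E) : Set V :=
  if T.src (h e) = sq then {J.src e}
  else if T.tgt (h e) = sq then {J.tgt e}
  else ∅

/-- A (quasi) patch graph rewrite rule: two schemes and a trace function. -/
structure Rule (V E L : Type) where
  PL : Graph V E L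
  TL : Graph V E Unit
  PR : Graph V E L
  TR : Graph V E Unit
  tr : E → E

/-- Well-formedness of a quasi rule, including the trace condition. -/
def Rule.WF (sq : V) (r : Rule V E L) : Prop :=
  IsPatchType sq r.PL r.TL ∧ IsPatchType sq r.PR r.TR ∧
  ∀ e ∈ r.TR.Es, r.tr e ∈ r.TL.Es ∧
    ((r.TR.src e = sq ∨ r.TR.tgt e = sq) →
      (r.TL.src (r.tr e) = sq ∨ r.TL.tgt (r.tr e) = sq))

/-- Rule isomorphism: a renaming fixing □ relating the schemes and commuting with the traces. -/
def Rule.Iso (sq : V) (r r' : Rule V E L) : Prop :=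
  ∃ φ : Renaming V E, φ.rV sq = sq ∧
    (φ.apply r.PL).Eq r'.PL ∧ (φ.apply r.TL).Eq r'.TL ∧
    (φ.apply r.PR).Eq r'.PR ∧ (φ.apply r.TR).Eq r'.TR ∧
    ∀ e ∈ r.TR.Es, φ.rE (r.tr e) = r'.tr (φ.rE e)

/-- Preimage of t under h inside the edge set S. -/
def preim (S : Set E) (h : E → E) (t : E) : Set E := {e | e ∈ S ∧ h e = t}

/-- Condition (iv) of the rewrite relation: fiberwise bijections preserving labels
and with cxt containment. -/
def BijCond (sq : V) (r : Rule V E L) (J J' : Graph V E L) (hL hR : E → E) : Prop :=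
  ∀ t ∈ r.TR.Es, ∃ σ : E → E,
    Set.BijOn σ (preim J'.Es hR t) (preim J.Es hL (r.tr t)) ∧
    ∀ e ∈ preim J'.Es hR t,
      J'.lab e = J.lab (σ e) ∧ cxt sq J' r.TR hR e ⊆ cxt sq J r.TL hL (σ e)

/-- A rewrite step via a fixed rule r, with context C, left patch J and right patch J'. -/
def StepVia (sq : V) (r : Rule V E L) (C J J' : Graph V E L) : Prop :=
  ∃ hL hR : E → E,
    Disj C r.PL ∧ IsPatch C r.PL J ∧
    Disj C r.PR ∧ IsPatch C r.PR J' ∧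
    AdherenceMap sq C r.PL J r.TL hL ∧
    AdherenceMap sq C r.PR J' r.TR hR ∧
    BijCond sq r J J' hL hR

/-- The rewrite relation induced by a (quasi) patch graph rewrite system R. -/
def Step (sq : V) (R : Set (Rule V E L)) (G H : Graph V E L) : Prop :=
  ∃ r₀ ∈ R, ∃ r : Rule V E L, Rule.Iso sq r₀ r ∧
    ∃ C J J' : Graph V E L, StepVia sq r C J J' ∧
      G.Eq (comp C J r.PL) ∧ H.Eq (comp C J' r.PR)

/-- Subgraph relation. -/
def Subgraph (M G : Graph V E L) : Prop :=
  M.Vs ⊆ G.Vs ∧ M.Es ⊆ G.Es ∧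
  ∀ e ∈ M.Es, M.src e = G.src e ∧ M.tgt e = G.tgt e ∧ M.lab e = G.lab e

/-! ### Auxiliary lemmas for rule determinism -/

lemma cxt_subsingleton {L₃ : Type} (sq : V) (J : Graph V E L₃) (T : Graph V E Unit)
    (h : E → E) (e : E) : (cxt sq J T h e).Subsingleton := by
  unfold cxt
  split_ifs <;>
    first
      | exact Set.subsingleton_singleton
      | exact Set.subsingleton_empty

lemma patchType_cases {L₂ : Type} (sq : V) (M : Graph V E L₂) (T : Graph V E Unit)
    (hpt : IsPatchType sq M T) {t : E} (ht : t ∈ T.Es) :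
    (T.src t = sq ∧ T.tgt t ∈ M.Vs) ∨ (T.src t ∈ M.Vs ∧ T.tgt t = sq) ∨
      (T.src t ∈ M.Vs ∧ T.tgt t ∈ M.Vs) := by
  have h := hpt.2.2.2 t ht
  simpa [trivialGraph] using h

lemma endpoint_facts (sq : V) (C M J' : Graph V E L) (T : Graph V E Unit) (h : E → E)
    (hpt : IsPatchType sq M T) (hp : IsPatch C M J')
    (hadm : AdherenceMap sq C M J' T h) {e : E} (he : e ∈ J'.Es) :
    (T.src (h e) ≠ sq → J'.src e = T.src (h e)) ∧
    (T.tgt (h e) ≠ sq → J'.tgt e = T.tgt (h e)) ∧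
    (T.src (h e) = sq → cxt sq J' T h e = {J'.src e}) ∧
    (T.src (h e) ≠ sq → T.tgt (h e) = sq → cxt sq J' T h e = {J'.tgt e}) := by
  obtain ⟨hTe, a1, a2, a3, a4⟩ := hadm e he
  have hends := hp.2.2 e he
  refine ⟨?_, ?_, ?_, ?_⟩
  · intro hne
    rcases hends with ⟨h1', h2'⟩ | ⟨h1', h2'⟩ | ⟨h1', h2'⟩
    · exact absurd (a1 h1') hne
    · exact (a2 h1').symm
    · exact (a2 h1').symm
  · intro hne
    rcases hends with ⟨h1', h2'⟩ | ⟨h1', h2'⟩ | ⟨h1', h2'⟩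
    · exact (a4 h2').symm
    · exact absurd (a3 h2') hne
    · exact (a4 h2').symm
  · intro hs
    unfold cxt
    rw [if_pos hs]
  · intro hs htg
    unfold cxt
    rw [if_neg hs, if_pos htg]

lemma patch_vs_subset (C M J' : Graph V E L) (hp : IsPatch C M J') :
    J'.Vs ⊆ C.Vs ∪ M.Vs := by
  rw [hp.2.1]
  rintro v (⟨e, he, rfl⟩ | ⟨e, he, rfl⟩) <;>
    rcases hp.2.2 e he with ⟨h1, h2⟩ | ⟨h1, h2⟩ | ⟨h1, h2⟩ <;>
      first
        | exact Or.inl h1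
        | exact Or.inr h1
        | exact Or.inl h2
        | exact Or.inr h2

lemma comp_on_C (C J M : Graph V E L) {e : E} (h : e ∈ C.Es) :
    (comp C J M).src e = C.src e ∧ (comp C J M).tgt e = C.tgt e ∧
      (comp C J M).lab e = C.lab e := by
  refine ⟨?_, ?_, ?_⟩ <;> simp [comp, Graph.union, h]

lemma comp_on_J (C J M : Graph V E L) {e : E} (hJ : e ∈ J.Es) (hC : e ∉ C.Es) :
    (comp C J M).src e = J.src e ∧ (comp C J M).tgt e = J.tgt e ∧
      (comp C J M).lab e = J.lab e := by
  refine ⟨?_, ?_, ?_⟩ <;> simp [comp, Graph.union, hJ, hC]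

lemma comp_on_M (C J M : Graph V E L) {e : E} (hM : e ∈ M.Es) (hC : e ∉ C.Es)
    (hJ : e ∉ J.Es) :
    (comp C J M).src e = M.src e ∧ (comp C J M).tgt e = M.tgt e ∧
      (comp C J M).lab e = M.lab e := by
  refine ⟨?_, ?_, ?_⟩ <;> simp [comp, Graph.union, hJ, hC]

/-- Rule determinism. If a single (non-quasi) rule of R^≈
(so its left patch type is simple) derives both G →_R C ·_{J₁} P_R and
G →_R C ·_{J₂} P_R, then the results are isomorphic. -/
theorem rule_determinism (sq : V) (R : Set (Rule V E L))
    (r₀ : Rule V E L) (hr₀ : r₀ ∈ R) (r : Rule V E L) (hiso : Rule.Iso sq r₀ r)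
    (hWF : r.WF sq) (hSimple : r.TL.Simple)
    (G C J J₁ J₂ : Graph V E L)
    (hG : G.Eq (comp C J r.PL))
    (h1 : StepVia sq r C J J₁) (h2 : StepVia sq r C J J₂) :
    Iso (comp C J₁ r.PR) (comp C J₂ r.PR) := by
  classical
  obtain ⟨hL₁, hR₁, disjCL, patchL, disjCR, patch1, admL₁, adm1, bij1⟩ := h1
  obtain ⟨hL₂, hR₂, -, -, -, patch2, admL₂, adm2, bij2⟩ := h2
  obtain ⟨sqPL, ptL⟩ := hWF.1
  obtain ⟨sqPR, ptR⟩ := hWF.2.1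
  -- Step A: the two left adherence maps agree on J.Es (T_L simple).
  have hLeq : ∀ j ∈ J.Es, hL₁ j = hL₂ j := by
    intro j hj
    obtain ⟨m1, a1, a2, a3, a4⟩ := admL₁ j hj
    obtain ⟨m2, b1, b2, b3, b4⟩ := admL₂ j hj
    have hsrc : r.TL.src (hL₁ j) = r.TL.src (hL₂ j) := by
      rcases patchL.2.2 j hj with ⟨h1', h2'⟩ | ⟨h1', h2'⟩ | ⟨h1', h2'⟩
      · rw [a1 h1', b1 h1']
      · rw [a2 h1', b2 h1']
      · rw [a2 h1', b2 h1']
    have htgt : r.TL.tgt (hL₁ j) = r.TL.tgt (hL₂ j) := by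
      rcases patchL.2.2 j hj with ⟨h1', h2'⟩ | ⟨h1', h2'⟩ | ⟨h1', h2'⟩
      · rw [a4 h2', b4 h2']
      · rw [a3 h2', b3 h2']
      · rw [a4 h2', b4 h2']
    exact hSimple _ m1 _ m2 hsrc htgt (Subsingleton.elim _ _)
  -- Step B: build the edge bijection τ between the two right patches.
  have key : ∃ τ : E → E, Set.BijOn τ J₁.Es J₂.Es ∧
      ∀ e ∈ J₁.Es, J₂.src (τ e) = J₁.src e ∧ J₂.tgt (τ e) = J₁.tgt e ∧
        J₂.lab (τ e) = J₁.lab e := by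
    rcases isEmpty_or_nonempty E with hE | hE
    · refine ⟨id, ?_, ?_⟩
      · have h1e : J₁.Es = ∅ := Set.eq_empty_of_isEmpty _
        have h2e : J₂.Es = ∅ := Set.eq_empty_of_isEmpty _
        rw [h1e, h2e]
        simp [Set.bijOn_empty]
      · intro e he
        exact (hE.false e).elim
    · have bij1' : ∀ t : E, ∃ σ : E → E, t ∈ r.TR.Es →
          Set.BijOn σ (preim J₁.Es hR₁ t) (preim J.Es hL₁ (r.tr t)) ∧
          ∀ e ∈ preim J₁.Es hR₁ t, J₁.lab e = J.lab (σ e) ∧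
            cxt sq J₁ r.TR hR₁ e ⊆ cxt sq J r.TL hL₁ (σ e) := by
        intro t
        by_cases ht : t ∈ r.TR.Es
        · obtain ⟨σ, hσ⟩ := bij1 t ht
          exact ⟨σ, fun _ => hσ⟩
        · exact ⟨id, fun h => absurd h ht⟩
      have bij2' : ∀ t : E, ∃ σ : E → E, t ∈ r.TR.Es →
          Set.BijOn σ (preim J₂.Es hR₂ t) (preim J.Es hL₂ (r.tr t)) ∧
          ∀ e ∈ preim J₂.Es hR₂ t, J₂.lab e = J.lab (σ e) ∧
            cxt sq J₂ r.TR hR₂ e ⊆ cxt sq J r.TL hL₂ (σ e) := by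
        intro t
        by_cases ht : t ∈ r.TR.Es
        · obtain ⟨σ, hσ⟩ := bij2 t ht
          exact ⟨σ, fun _ => hσ⟩
        · exact ⟨id, fun h => absurd h ht⟩
      choose σ₁ hσ₁ using bij1'
      choose σ₂ hσ₂ using bij2'
      have Feq : ∀ t : E, preim J.Es hL₂ (r.tr t) = preim J.Es hL₁ (r.tr t) := by
        intro t
        ext a
        simp only [preim, Set.mem_setOf_eq]
        constructor
        · rintro ⟨ha, h'⟩
          exact ⟨ha, by rw [hLeq a ha]; exact h'⟩
        · rintro ⟨ha, h'⟩
          refine ⟨ha, ?_⟩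
          rw [← hLeq a ha] ; exact h'
      set g : E → E → E := fun t => Function.invFunOn (σ₂ t) (preim J₂.Es hR₂ t) with hg
      have b₁ : ∀ t ∈ r.TR.Es,
          Set.BijOn (σ₁ t) (preim J₁.Es hR₁ t) (preim J.Es hL₁ (r.tr t)) :=
        fun t ht => (hσ₁ t ht).1
      have b₂ : ∀ t ∈ r.TR.Es,
          Set.BijOn (σ₂ t) (preim J₂.Es hR₂ t) (preim J.Es hL₁ (r.tr t)) :=
        fun t ht => (Feq t) ▸ (hσ₂ t ht).1
      have inv : ∀ t ∈ r.TR.Es,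
          Set.InvOn (g t) (σ₂ t) (preim J₂.Es hR₂ t) (preim J.Es hL₁ (r.tr t)) :=
        fun t ht => (b₂ t ht).invOn_invFunOn
      have gb : ∀ t ∈ r.TR.Es,
          Set.BijOn (g t) (preim J.Es hL₁ (r.tr t)) (preim J₂.Es hR₂ t) :=
        fun t ht => Set.BijOn.symm (inv t ht).symm (b₂ t ht)
      set τ : E → E := fun e => g (hR₁ e) (σ₁ (hR₁ e) e) with hτdef
      have hmem : ∀ e ∈ J₁.Es, τ e ∈ preim J₂.Es hR₂ (hR₁ e) ∧
          σ₂ (hR₁ e) (τ e) = σ₁ (hR₁ e) e ∧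
          σ₁ (hR₁ e) e ∈ preim J.Es hL₁ (r.tr (hR₁ e)) := by
        intro e he
        have ht : hR₁ e ∈ r.TR.Es := (adm1 e he).1
        have hef : e ∈ preim J₁.Es hR₁ (hR₁ e) := ⟨he, rfl⟩
        have ha : σ₁ (hR₁ e) e ∈ preim J.Es hL₁ (r.tr (hR₁ e)) := (b₁ _ ht).mapsTo hef
        exact ⟨(gb _ ht).mapsTo ha, (inv _ ht).2 ha, ha⟩
      have hprops : ∀ e ∈ J₁.Es, J₂.src (τ e) = J₁.src e ∧ J₂.tgt (τ e) = J₁.tgt e ∧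
          J₂.lab (τ e) = J₁.lab e := by
        intro e he
        have ht : hR₁ e ∈ r.TR.Es := (adm1 e he).1
        obtain ⟨hτm, hστ, ha⟩ := hmem e he
        have hRτ : hR₂ (τ e) = hR₁ e := hτm.2
        have lab1 : J₁.lab e = J.lab (σ₁ (hR₁ e) e) := ((hσ₁ _ ht).2 e ⟨he, rfl⟩).1
        have lab2 : J₂.lab (τ e) = J.lab (σ₁ (hR₁ e) e) := by
          have h' := ((hσ₂ _ ht).2 (τ e) hτm).1
          rw [hστ] at h'
          exact h'
        have cxtJeq : cxt sq J r.TL hL₂ (σ₁ (hR₁ e) e) =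
            cxt sq J r.TL hL₁ (σ₁ (hR₁ e) e) := by
          unfold cxt
          rw [← hLeq _ ha.1]
        have cxt1 : cxt sq J₁ r.TR hR₁ e ⊆ cxt sq J r.TL hL₁ (σ₁ (hR₁ e) e) :=
          ((hσ₁ _ ht).2 e ⟨he, rfl⟩).2
        have cxt2 : cxt sq J₂ r.TR hR₂ (τ e) ⊆ cxt sq J r.TL hL₁ (σ₁ (hR₁ e) e) := by
          have h' := ((hσ₂ _ ht).2 (τ e) hτm).2
          rw [hστ, cxtJeq] at h'
          exact h'
        obtain ⟨s1, t1, c1, d1⟩ :=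
          endpoint_facts sq C r.PR J₁ r.TR hR₁ ⟨sqPR, ptR⟩ patch1 adm1 he
        obtain ⟨s2, t2', c2, d2⟩ :=
          endpoint_facts sq C r.PR J₂ r.TR hR₂ ⟨sqPR, ptR⟩ patch2 adm2 hτm.1
        rw [hRτ] at s2 t2' c2 d2
        have hsub := cxt_subsingleton sq J r.TL hL₁ (σ₁ (hR₁ e) e)
        rcases patchType_cases sq r.PR r.TR ⟨sqPR, ptR⟩ ht with
          ⟨hs, ht'⟩ | ⟨hs, ht'⟩ | ⟨hs, ht'⟩
        · -- src = sq, tgt ∈ PR.Vs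
          have htne : r.TR.tgt (hR₁ e) ≠ sq := fun h => sqPR (h ▸ ht')
          have m1 : J₁.src e ∈ cxt sq J r.TL hL₁ (σ₁ (hR₁ e) e) :=
            cxt1 (by rw [c1 hs]; exact rfl)
          have m2 : J₂.src (τ e) ∈ cxt sq J r.TL hL₁ (σ₁ (hR₁ e) e) :=
            cxt2 (by rw [c2 hs]; exact rfl)
          exact ⟨hsub m2 m1, by rw [t2' htne, t1 htne], lab2.trans lab1.symm⟩
        · -- src ∈ PR.Vs, tgt = sq
          have hsne : r.TR.src (hR₁ e) ≠ sq := fun h => sqPR (h ▸ hs)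
          have m1 : J₁.tgt e ∈ cxt sq J r.TL hL₁ (σ₁ (hR₁ e) e) :=
            cxt1 (by rw [d1 hsne ht']; exact rfl)
          have m2 : J₂.tgt (τ e) ∈ cxt sq J r.TL hL₁ (σ₁ (hR₁ e) e) :=
            cxt2 (by rw [d2 hsne ht']; exact rfl)
          exact ⟨by rw [s2 hsne, s1 hsne], hsub m2 m1, lab2.trans lab1.symm⟩
        · -- both in PR.Vs
          have hsne : r.TR.src (hR₁ e) ≠ sq := fun h => sqPR (h ▸ hs)
          have htne : r.TR.tgt (hR₁ e) ≠ sq := fun h => sqPR (h ▸ ht')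
          exact ⟨by rw [s2 hsne, s1 hsne], by rw [t2' htne, t1 htne],
            lab2.trans lab1.symm⟩
      refine ⟨τ, ⟨fun e he => (hmem e he).1.1, ?_, ?_⟩, hprops⟩
      · -- injective on J₁.Es
        intro x hx y hy hxy
        have tx := hmem x hx
        have ty := hmem y hy
        have htR : hR₁ x = hR₁ y := by
          rw [← tx.1.2, ← ty.1.2, hxy]
        have ht : hR₁ x ∈ r.TR.Es := (adm1 x hx).1
        apply (b₁ _ ht).injOn ⟨hx, rfl⟩ (⟨hy, htR.symm⟩ : y ∈ preim J₁.Es hR₁ (hR₁ x))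
        have h2 : σ₂ (hR₁ x) (τ y) = σ₁ (hR₁ x) y := by
          rw [htR]; exact ty.2.1
        rw [← tx.2.1, ← h2, hxy]
      · -- surjective onto J₂.Es
        intro e' he'
        have ht : hR₂ e' ∈ r.TR.Es := (adm2 e' he').1
        have ha : σ₂ (hR₂ e') e' ∈ preim J.Es hL₁ (r.tr (hR₂ e')) :=
          (b₂ _ ht).mapsTo ⟨he', rfl⟩
        obtain ⟨x, hx, hax⟩ := (b₁ _ ht).surjOn ha
        refine ⟨x, hx.1, ?_⟩
        have hτx : τ x = g (hR₂ e') (σ₂ (hR₂ e') e') := by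
          show g (hR₁ x) (σ₁ (hR₁ x) x) = _
          rw [hx.2, hax]
        rw [hτx]
        exact (inv _ ht).1 ⟨he', rfl⟩
  obtain ⟨τ, hbij, hpres⟩ := key
  -- disjointness facts
  have hd1 := Set.eq_empty_iff_forall_notMem.mp patch1.1
  have hd2 := Set.eq_empty_iff_forall_notMem.mp patch2.1
  have hdCR := Set.eq_empty_iff_forall_notMem.mp disjCR.2
  have n1C : ∀ e ∈ J₁.Es, e ∉ C.Es := fun e he hC => hd1 e ⟨he, Or.inl hC⟩
  have n1P : ∀ e ∈ J₁.Es, e ∉ r.PR.Es := fun e he hP => hd1 e ⟨he, Or.inr hP⟩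
  have n2C : ∀ e ∈ J₂.Es, e ∉ C.Es := fun e he hC => hd2 e ⟨he, Or.inl hC⟩
  have n2P : ∀ e ∈ J₂.Es, e ∉ r.PR.Es := fun e he hP => hd2 e ⟨he, Or.inr hP⟩
  have nCP : ∀ e ∈ C.Es, e ∉ r.PR.Es := fun e he hP => hdCR e ⟨he, hP⟩
  -- a bijection between the difference sets
  have hc : J₂.Es.ncard = J₁.Es.ncard := by
    rw [← hbij.image_eq, Set.ncard_image_of_injOn hbij.injOn]
  have hdcard : (J₂.Es \ J₁.Es).ncard = (J₁.Es \ J₂.Es).ncard := by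
    have e1 := Set.ncard_diff_add_ncard_of_subset
      (Set.inter_subset_left : J₁.Es ∩ J₂.Es ⊆ J₁.Es) J₁.finE
    have e2 := Set.ncard_diff_add_ncard_of_subset
      (Set.inter_subset_right : J₁.Es ∩ J₂.Es ⊆ J₂.Es) J₂.finE
    rw [Set.diff_self_inter] at e1
    rw [Set.diff_inter_self_eq_diff] at e2
    omega
  haveI : Finite ↥(J₂.Es \ J₁.Es) := ((J₂.finE).diff).to_subtype
  haveI : Finite ↥(J₁.Es \ J₂.Es) := ((J₁.finE).diff).to_subtype
  obtain ⟨β⟩ : Nonempty (↥(J₂.Es \ J₁.Es) ≃ ↥(J₁.Es \ J₂.Es)) :=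
    Finite.card_eq.mp (by rw [Nat.card_coe_set_eq, Nat.card_coe_set_eq, hdcard])
  -- the global permutation
  set π : E → E := fun e =>
    if h : e ∈ J₁.Es then τ e
    else if h2 : e ∈ J₂.Es then (β ⟨e, h2, h⟩ : E) else e with hπdef
  have πJ1 : ∀ e, ∀ h : e ∈ J₁.Es, π e = τ e := by
    intro e h; simp only [hπdef, dif_pos h]
  have πdiff : ∀ e, ∀ h2 : e ∈ J₂.Es, ∀ h : e ∉ J₁.Es, π e = (β ⟨e, h2, h⟩ : E) := by
    intro e h2 h; simp only [hπdef, dif_neg h, dif_pos h2]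
  have πfix : ∀ e, e ∉ J₁.Es → e ∉ J₂.Es → π e = e := by
    intro e h h2; simp only [hπdef, dif_neg h, dif_neg h2]
  have πmem1 : ∀ e ∈ J₁.Es, π e ∈ J₂.Es := by
    intro e he; rw [πJ1 e he]; exact hbij.mapsTo he
  have hinj : Function.Injective π := by
    intro x y h
    by_cases hx1 : x ∈ J₁.Es <;> by_cases hy1 : y ∈ J₁.Es
    · apply hbij.injOn hx1 hy1
      rwa [πJ1 x hx1, πJ1 y hy1] at h
    · by_cases hy2 : y ∈ J₂.Es
      · exfalso
        have hxm := πmem1 x hx1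
        rw [πdiff y hy2 hy1] at h
        have hnot := (β ⟨y, hy2, hy1⟩).2.2
        rw [← h] at hnot
        exact hnot hxm
      · rw [πfix y hy1 hy2] at h
        exact absurd (h ▸ πmem1 x hx1) hy2
    · by_cases hx2 : x ∈ J₂.Es
      · exfalso
        have hym := πmem1 y hy1
        rw [πdiff x hx2 hx1] at h
        have hnot := (β ⟨x, hx2, hx1⟩).2.2
        rw [h] at hnot
        exact hnot hym
      · rw [πfix x hx1 hx2] at h
        exact absurd (h.symm ▸ πmem1 y hy1) hx2
    · by_cases hx2 : x ∈ J₂.Es <;> by_cases hy2 : y ∈ J₂.Es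
      · rw [πdiff x hx2 hx1, πdiff y hy2 hy1] at h
        have := β.injective (Subtype.coe_injective h)
        exact congrArg Subtype.val this
      · exfalso
        rw [πdiff x hx2 hx1, πfix y hy1 hy2] at h
        have := (β ⟨x, hx2, hx1⟩).2.1
        rw [h] at this
        exact hy1 this
      · exfalso
        rw [πfix x hx1 hx2, πdiff y hy2 hy1] at h
        have := (β ⟨y, hy2, hy1⟩).2.1
        rw [← h] at this
        exact hx1 this
      · rwa [πfix x hx1 hx2, πfix y hy1 hy2] at h
  have hsurj : Function.Surjective π := by
    intro y
    by_cases hy2 : y ∈ J₂.Es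
    · obtain ⟨x, hx, hxy⟩ := hbij.surjOn hy2
      exact ⟨x, by rw [πJ1 x hx]; exact hxy⟩
    · by_cases hy1 : y ∈ J₁.Es
      · obtain ⟨⟨zv, hz1, hz2⟩, hzeq⟩ := β.surjective ⟨y, hy1, hy2⟩
        refine ⟨zv, ?_⟩
        rw [πdiff zv hz1 hz2, hzeq]
      · exact ⟨y, πfix y hy1 hy2⟩
  set φE : E ≃ E := Equiv.ofBijective π ⟨hinj, hsurj⟩ with hφE
  have hφapp : ∀ x, φE x = π x := fun x => rfl
  have hφsymm : ∀ x, φE.symm (π x) = x := by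
    intro x
    have := φE.symm_apply_apply x
    rwa [hφapp] at this
  -- the vertex sets
  have hv : ∀ J' : Graph V E L, IsPatch C r.PR J' →
      (C.Vs ∪ J'.Vs) ∪ r.PR.Vs = C.Vs ∪ r.PR.Vs := by
    intro J' hp
    apply Set.Subset.antisymm
    · exact Set.union_subset
        (Set.union_subset Set.subset_union_left (patch_vs_subset C r.PR J' hp))
        Set.subset_union_right
    · rintro v (h | h)
      · exact Or.inl (Or.inl h)
      · exact Or.inr h
  refine ⟨⟨Equiv.refl V, φE⟩, ?_, ?_, ?_⟩
  · -- vertex sets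
    show (Equiv.refl V) '' ((C.Vs ∪ J₁.Vs) ∪ r.PR.Vs) = (C.Vs ∪ J₂.Vs) ∪ r.PR.Vs
    rw [Equiv.coe_refl, Set.image_id, hv J₁ patch1, hv J₂ patch2]
  · -- edge sets
    show φE '' ((C.Es ∪ J₁.Es) ∪ r.PR.Es) = (C.Es ∪ J₂.Es) ∪ r.PR.Es
    have hEq : ∀ x, φE x = π x := hφapp
    have i1 : φE '' C.Es = C.Es := by
      have h : Set.EqOn (⇑φE) id C.Es := fun e he => by
        rw [hEq e]; exact πfix e (fun h' => n1C e h' he) (fun h' => n2C e h' he)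
      rw [h.image_eq, Set.image_id]
    have i2 : φE '' J₁.Es = J₂.Es := by
      have h : Set.EqOn (⇑φE) τ J₁.Es := fun e he => by rw [hEq e, πJ1 e he]
      rw [h.image_eq, hbij.image_eq]
    have i3 : φE '' r.PR.Es = r.PR.Es := by
      have h : Set.EqOn (⇑φE) id r.PR.Es := fun e he => by
        rw [hEq e]; exact πfix e (fun h' => n1P e h' he) (fun h' => n2P e h' he)
      rw [h.image_eq, Set.image_id]
    rw [Set.image_union, Set.image_union, i1, i2, i3]
  · -- sources, targets, labels
    intro e he
    have heG2 : e ∈ (C.Es ∪ J₂.Es) ∪ r.PR.Es := by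
      have hEs : (Renaming.apply ⟨Equiv.refl V, φE⟩ (comp C J₁ r.PR)).Es =
          (C.Es ∪ J₂.Es) ∪ r.PR.Es := by
        show φE '' ((C.Es ∪ J₁.Es) ∪ r.PR.Es) = (C.Es ∪ J₂.Es) ∪ r.PR.Es
        have i1 : φE '' C.Es = C.Es := by
          have h : Set.EqOn (⇑φE) id C.Es := fun x hx => by
            rw [hφapp x]; exact πfix x (fun h' => n1C x h' hx) (fun h' => n2C x h' hx)
          rw [h.image_eq, Set.image_id]
        have i2 : φE '' J₁.Es = J₂.Es := by
          have h : Set.EqOn (⇑φE) τ J₁.Es := fun x hx => by rw [hφapp x, πJ1 x hx]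
          rw [h.image_eq, hbij.image_eq]
        have i3 : φE '' r.PR.Es = r.PR.Es := by
          have h : Set.EqOn (⇑φE) id r.PR.Es := fun x hx => by
            rw [hφapp x]; exact πfix x (fun h' => n1P x h' hx) (fun h' => n2P x h' hx)
          rw [h.image_eq, Set.image_id]
        rw [Set.image_union, Set.image_union, i1, i2, i3]
      rw [← hEs]; exact he
    -- reduce the goal to a statement about G₁ at φE.symm e
    have hgoal : ∀ x : E, φE.symm e = x →
        (comp C J₁ r.PR).src x = (comp C J₂ r.PR).src e ∧
        (comp C J₁ r.PR).tgt x = (comp C J₂ r.PR).tgt e ∧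
        (comp C J₁ r.PR).lab x = (comp C J₂ r.PR).lab e →
        (Renaming.apply ⟨Equiv.refl V, φE⟩ (comp C J₁ r.PR)).src e =
          (comp C J₂ r.PR).src e ∧
        (Renaming.apply ⟨Equiv.refl V, φE⟩ (comp C J₁ r.PR)).tgt e =
          (comp C J₂ r.PR).tgt e ∧
        (Renaming.apply ⟨Equiv.refl V, φE⟩ (comp C J₁ r.PR)).lab e =
          (comp C J₂ r.PR).lab e := by
      intro x hx hmain
      refine ⟨?_, ?_, ?_⟩
      · show (Equiv.refl V) ((comp C J₁ r.PR).src (φE.symm e)) = _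
        rw [Equiv.refl_apply, hx]; exact hmain.1
      · show (Equiv.refl V) ((comp C J₁ r.PR).tgt (φE.symm e)) = _
        rw [Equiv.refl_apply, hx]; exact hmain.2.1
      · show (comp C J₁ r.PR).lab (φE.symm e) = _
        rw [hx]; exact hmain.2.2
    rcases heG2 with (hC | hJ2) | hPR
    · have hfix : π e = e := πfix e (fun h' => n1C e h' hC) (fun h' => n2C e h' hC)
      have hsy : φE.symm e = e := by
        have := hφsymm e; rwa [hfix] at this
      apply hgoal e hsy
      obtain ⟨u1, u2, u3⟩ := comp_on_C C J₁ r.PR hC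
      obtain ⟨w1, w2, w3⟩ := comp_on_C C J₂ r.PR hC
      exact ⟨by rw [u1, w1], by rw [u2, w2], by rw [u3, w3]⟩
    · obtain ⟨x, hx, hxe⟩ := hbij.surjOn hJ2
      have hsy : φE.symm e = x := by
        have := hφsymm x; rwa [πJ1 x hx, hxe] at this
      apply hgoal x hsy
      obtain ⟨u1, u2, u3⟩ := comp_on_J C J₁ r.PR hx (n1C x hx)
      obtain ⟨w1, w2, w3⟩ := comp_on_J C J₂ r.PR hJ2 (n2C e hJ2)
      obtain ⟨p1, p2, p3⟩ := hpres x hx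
      refine ⟨?_, ?_, ?_⟩
      · rw [u1, w1, ← hxe]; exact p1.symm
      · rw [u2, w2, ← hxe]; exact p2.symm
      · rw [u3, w3, ← hxe]; exact p3.symm
    · have hfix : π e = e := πfix e (fun h' => n1P e h' hPR) (fun h' => n2P e h' hPR)
      have hsy : φE.symm e = e := by
        have := hφsymm e; rwa [hfix] at this
      apply hgoal e hsy
      have heC : e ∉ C.Es := fun h' => nCP e h' hPR
      obtain ⟨u1, u2, u3⟩ := comp_on_M C J₁ r.PR hPR heC (fun h' => n1P e h' hPR)
      obtain ⟨w1, w2, w3⟩ := comp_on_M C J₂ r.PR hPR heC (fun h' => n2P e h' hPR)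
      exact ⟨by rw [u1, w1], by rw [u2, w2], by rw [u3, w3]⟩

end PGR
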